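/- For q Bernoulli parameters: let p, q ∈ (0, 1) with p ≠ q and r_i, r_j > 0. Then the infimum over x ∈ (0, 1) of r_i (x log(x/p) + (1−x) log((1−x)/(1−p))) + r_j (x log(x/q) + (1−x) log((1−x)/(1−q))) equals −(r_i + r_j) log[ (1−p)^{r_i/(r_i+r_j)} (1−q)^{r_j/(r_i+r_j)} + p^{r_i/(r_i+r_j)} q^{r_j/(r_i+r_j)} ]. -/

import Mathlib

lemma gibbs_aux (x c : ℝ) (hx : 0 < x) (hx1 : x < 1) (hc : 0 < c) (hc1 : c < 1) :
    0 ≤ x * Real.log (x / c) + (1 - x) * Real.log ((1 - x) / (1 - c)) := by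
  have hx' : (0:ℝ) < 1 - x := by linarith
  have hc' : (0:ℝ) < 1 - c := by linarith
  have h1 : Real.log (c / x) ≤ c / x - 1 := Real.log_le_sub_one_of_pos (by positivity)
  have h2 : Real.log ((1 - c) / (1 - x)) ≤ (1 - c) / (1 - x) - 1 :=
    Real.log_le_sub_one_of_pos (by positivity)
  have e1 : x * Real.log (x / c) = -(x * Real.log (c / x)) := by
    rw [Real.log_div hx.ne' hc.ne', Real.log_div hc.ne' hx.ne']; ring
  have e2 : (1 - x) * Real.log ((1 - x) / (1 - c)) =
      -((1 - x) * Real.log ((1 - c) / (1 - x))) := by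
    rw [Real.log_div hx'.ne' hc'.ne', Real.log_div hc'.ne' hx'.ne']; ring
  have b1 : x * Real.log (c / x) ≤ c - x := by
    have := mul_le_mul_of_nonneg_left h1 hx.le
    have hxx : x * (c / x - 1) = c - x := by field_simp
    linarith
  have b2 : (1 - x) * Real.log ((1 - c) / (1 - x)) ≤ (1 - c) - (1 - x) := by
    have := mul_le_mul_of_nonneg_left h2 hx'.le
    have hxx : (1 - x) * ((1 - c) / (1 - x) - 1) = (1 - c) - (1 - x) := by field_simp
    linarith
  rw [e1, e2]; linarith

theorem stmt_19 (p q ri rj : ℝ) (hp : p ∈ Set.Ioo (0 : ℝ) 1) (hq : q ∈ Set.Ioo (0 : ℝ) 1)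
    (hpq : p ≠ q) (hri : 0 < ri) (hrj : 0 < rj) :
    IsGLB ((fun x : ℝ =>
        ri * (x * Real.log (x / p) + (1 - x) * Real.log ((1 - x) / (1 - p))) +
        rj * (x * Real.log (x / q) + (1 - x) * Real.log ((1 - x) / (1 - q)))) ''
        Set.Ioo (0 : ℝ) 1)
      (-(ri + rj) * Real.log
        ((1 - p) ^ (ri / (ri + rj)) * (1 - q) ^ (rj / (ri + rj)) +
          p ^ (ri / (ri + rj)) * q ^ (rj / (ri + rj)))) := by
  obtain ⟨hp0, hp1⟩ := hp
  obtain ⟨hq0, hq1⟩ := hq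
  have hp1' : (0:ℝ) < 1 - p := by linarith
  have hq1' : (0:ℝ) < 1 - q := by linarith
  set s := ri + rj with hs_def
  have hs : 0 < s := by positivity
  set A := p ^ (ri / s) * q ^ (rj / s) with hA_def
  set B := (1 - p) ^ (ri / s) * (1 - q) ^ (rj / s) with hB_def
  have hA : 0 < A := by positivity
  have hB : 0 < B := by positivity
  have hAB : 0 < A + B := by linarith
  have logA : Real.log A = (ri / s) * Real.log p + (rj / s) * Real.log q := by
    rw [hA_def, Real.log_mul (by positivity) (by positivity),
      Real.log_rpow hp0, Real.log_rpow hq0]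
  have logB : Real.log B = (ri / s) * Real.log (1 - p) + (rj / s) * Real.log (1 - q) := by
    rw [hB_def, Real.log_mul (by positivity) (by positivity),
      Real.log_rpow hp1', Real.log_rpow hq1']
  set c := A / (A + B) with hc_def
  have hc : 0 < c := by positivity
  have hc1 : c < 1 := by
    rw [hc_def, div_lt_one hAB]; linarith
  have h1c : 1 - c = B / (A + B) := by
    rw [hc_def]; field_simp; ring
  have lc : Real.log c = Real.log A - Real.log (A + B) :=
    Real.log_div hA.ne' hAB.ne'
  have l1c : Real.log (1 - c) = Real.log B - Real.log (A + B) := by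
    rw [h1c, Real.log_div hB.ne' hAB.ne']
  -- key identity
  have key : ∀ x ∈ Set.Ioo (0:ℝ) 1,
      ri * (x * Real.log (x / p) + (1 - x) * Real.log ((1 - x) / (1 - p))) +
        rj * (x * Real.log (x / q) + (1 - x) * Real.log ((1 - x) / (1 - q))) =
      s * (x * Real.log (x / c) + (1 - x) * Real.log ((1 - x) / (1 - c))) -
        s * Real.log (A + B) := by
    rintro x ⟨hx0, hx1⟩
    have hx1' : (0:ℝ) < 1 - x := by linarith
    rw [Real.log_div hx0.ne' hp0.ne', Real.log_div hx1'.ne' hp1'.ne',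
      Real.log_div hx0.ne' hq0.ne', Real.log_div hx1'.ne' hq1'.ne',
      Real.log_div hx0.ne' hc.ne', Real.log_div hx1'.ne' (by linarith : (0:ℝ) < 1 - c).ne',
      lc, l1c, logA, logB]
    field_simp
    ring
  set m := -(ri + rj) * Real.log ((1 - p) ^ (ri / (ri + rj)) * (1 - q) ^ (rj / (ri + rj)) +
      p ^ (ri / (ri + rj)) * q ^ (rj / (ri + rj))) with hm_def
  have hm : m = -s * Real.log (A + B) := by
    rw [hm_def, hA_def, hB_def, hs_def]
    ring_nf
  apply IsLeast.isGLB
  constructor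
  · -- m is attained at x = c
    refine ⟨c, ⟨hc, hc1⟩, ?_⟩
    have := key c ⟨hc, hc1⟩
    simp only at this ⊢
    rw [this, div_self hc.ne', div_self (by linarith : (0:ℝ) < 1 - c).ne', Real.log_one, hm]
    ring
  · rintro y ⟨x, hx, rfl⟩
    have hk := key x hx
    simp only at hk ⊢
    rw [hk, hm]
    have hg := gibbs_aux x c hx.1 hx.2 hc hc1
    nlinarith [mul_nonneg hs.le hg]
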